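/- Let k ≥ 1, let τ = (τ_n)_{n≥0} satisfy Property (P_k) with V_n = {v_{1,n},…,v_{m_n,n}} for n ≥ 1, and fix n ≥ 1. Let (x, y) be a nontrivial asymptotic pair in X_τ^{(n)}. Then J(x,y) = (v_{i,n}, ℓ) for some ℓ ∈ ℤ and some 1 ≤ i ≤ k, and moreover x_{[ℓ-2i, ℓ)} = v_{m_n,n} v_{1,n}² v_{2,n}² … v_{i-1,n}² v_{i,n}; that is, at the bifurcation point the signal v_{i,n} is always preceded by v_{m_n,n} v_{1,n}² … v_{i-1,n}². -/

import Mathlib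

open Filter Topology MeasureTheory

namespace AsympSOE

/-! ### Subshift basics -/

/-- Shift of a bi-infinite sequence by `n` (the `n`-th power of the left shift `S`). -/
def SShift {A : Type*} (n : ℤ) (x : ℤ → A) : ℤ → A := fun i => x (i + n)

/-- Two bi-infinite sequences are (left) asymptotic: they agree on a left half-line. -/
def SAsymp {A : Type*} (x y : ℤ → A) : Prop := ∃ ℓ : ℤ, ∀ i < ℓ, x i = y i

/-- `y` belongs to the shift-orbit of `x`. -/
def SSameOrbit {A : Type*} (x y : ℤ → A) : Prop := ∃ n : ℤ, SShift n x = y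

/-- The shift-orbits of `x` and `y` are asymptotic. -/
def SOrbAsymp {A : Type*} (x y : ℤ → A) : Prop :=
  ∃ n n' : ℤ, SAsymp (SShift n x) (SShift n' y)

/-- `C` is an asymptotic component of the subshift `X`: it is the `SOrbAsymp`-class of
some `x ∈ X` and contains at least two distinct orbits. -/
def SIsAsymComponent {A : Type*} (X : Set (ℤ → A)) (C : Set (ℤ → A)) : Prop :=
  ∃ x ∈ X, C = {y ∈ X | SOrbAsymp x y} ∧ ∃ y ∈ X, SOrbAsymp x y ∧ ¬ SSameOrbit x y

/-- A subshift: a nonempty closed shift-invariant set of bi-infinite sequences. -/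
def IsSubshift {A : Type*} [TopologicalSpace A] (X : Set (ℤ → A)) : Prop :=
  X.Nonempty ∧ IsClosed X ∧ (∀ x ∈ X, SShift 1 x ∈ X) ∧ (∀ x ∈ X, SShift (-1) x ∈ X)

/-- A minimal subshift: every orbit is dense. -/
def IsMinimalSubshift {A : Type*} [TopologicalSpace A] (X : Set (ℤ → A)) : Prop :=
  IsSubshift X ∧ ∀ x ∈ X, ∀ y ∈ X, y ∈ closure {z | SSameOrbit x z}

/-- The words of length `n` appearing in points of `X`. -/
def langOf {A : Type*} (X : Set (ℤ → A)) (n : ℕ) : Set (List A) :=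
  {w | ∃ x ∈ X, ∃ a : ℤ, (List.range n).map (fun t => x (a + t)) = w}

/-- The complexity function of a subshift. -/
noncomputable def complexityOf {A : Type*} (X : Set (ℤ → A)) (n : ℕ) : ℕ :=
  (langOf X n).ncard

/-- A Toeplitz sequence. -/
def IsToeplitzSeq {A : Type*} (x : ℤ → A) : Prop :=
  ∀ n : ℤ, ∃ p : ℕ, 0 < p ∧ ∀ k : ℤ, x (n + k * p) = x n

/-- A Toeplitz subshift: the shift-orbit closure of a Toeplitz sequence. -/
def IsToeplitzSubshift {A : Type*} [TopologicalSpace A] (X : Set (ℤ → A)) : Prop :=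
  ∃ x : ℤ → A, IsToeplitzSeq x ∧ X = closure {z | SSameOrbit x z}

/-! ### General topological dynamical systems -/

/-- The (full) orbit of `x` under the invertible map `T`. -/
def orbitEq {X : Type*} (T : Equiv.Perm X) (x : X) : Set X := {y | ∃ n : ℤ, (T ^ n) x = y}

/-- `x` and `y` are (left) asymptotic for `T`: `dist (T⁻ⁿ x) (T⁻ⁿ y) → 0` as `n → ∞`. -/
def MAsymp {X : Type*} [MetricSpace X] (T : Equiv.Perm X) (x y : X) : Prop :=
  Tendsto (fun n : ℕ => dist ((T ^ (-(n : ℤ))) x) ((T ^ (-(n : ℤ))) y)) atTop (𝓝 0)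

/-- The orbits of `x` and `y` are asymptotic. -/
def MOrbAsymp {X : Type*} [MetricSpace X] (T : Equiv.Perm X) (x y : X) : Prop :=
  ∃ n n' : ℤ, MAsymp T ((T ^ n) x) ((T ^ n') y)

/-- `C` is an asymptotic component of the system `(X, T)`: the `MOrbAsymp`-class of some
point `x`, containing at least two distinct orbits. -/
def MIsAsymComponent {X : Type*} [MetricSpace X] (T : Equiv.Perm X) (C : Set X) : Prop :=
  ∃ x, C = {y | MOrbAsymp T x y} ∧ ∃ y, MOrbAsymp T x y ∧ y ∉ orbitEq T x

/-- A minimal Cantor system: the compact metric space `X` is a Cantor space (nonempty,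
totally disconnected, without isolated points) and every `T`-orbit is dense. -/
def IsMinimalCantor {X : Type*} [MetricSpace X] (T : X ≃ₜ X) : Prop :=
  CompactSpace X ∧ TotallyDisconnectedSpace X ∧ Nonempty X ∧
    (∀ x : X, Filter.NeBot (𝓝[≠] x)) ∧ ∀ x : X, Dense (orbitEq T.toEquiv x)

/-- Strong orbit equivalence of the systems `(X, T)` and `(Y, S)`: an orbit equivalence
whose two orbit cocycles each have at most one point of discontinuity. -/
def IsSOE {X Y : Type*} [TopologicalSpace X] [TopologicalSpace Y]
    (T : X ≃ₜ X) (S : Y ≃ₜ Y) : Prop :=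
  ∃ φ : X ≃ₜ Y,
    (∀ x : X, φ '' orbitEq T.toEquiv x = orbitEq S.toEquiv (φ x)) ∧
    ∃ α β : X → ℤ,
      (∀ x, φ (T x) = (S.toEquiv ^ α x) (φ x)) ∧
      (∀ x, φ ((T.toEquiv ^ β x) x) = S (φ x)) ∧
      {x | ¬ContinuousAt α x}.Subsingleton ∧
      {x | ¬ContinuousAt β x}.Subsingleton

/-- The automorphism group of a system `(Y, S)`, as a subgroup of the permutation group:
the bi-continuous bijections commuting with `S`. -/
def autGroup {Y : Type*} [TopologicalSpace Y] (S : Y ≃ₜ Y) : Subgroup (Equiv.Perm Y) where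
  carrier := {φ | Continuous φ ∧ Continuous φ.symm ∧ ∀ y, φ (S y) = S (φ y)}
  one_mem' := ⟨continuous_id, continuous_id, fun _ => rfl⟩
  mul_mem' := by
    rintro a b ⟨ha1, ha2, ha3⟩ ⟨hb1, hb2, hb3⟩
    refine ⟨ha1.comp hb1, hb2.comp ha2, fun y => ?_⟩
    simp only [Equiv.Perm.mul_apply, hb3, ha3]
  inv_mem' := by
    rintro a ⟨ha1, ha2, ha3⟩
    refine ⟨by simpa using ha2, by rw [Equiv.Perm.inv_def, Equiv.symm_symm]; exact ha1, fun y => ?_⟩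
    have h : a (S (a⁻¹ y)) = S y := by
      rw [ha3 (a⁻¹ y), Equiv.Perm.inv_def, Equiv.apply_symm_apply]
    calc a⁻¹ (S y) = a⁻¹ (a (S (a⁻¹ y))) := by rw [h]
    _ = S (a⁻¹ y) := by rw [Equiv.Perm.inv_def, Equiv.symm_apply_apply]

/-! ### S-adic subshifts and Property (P_k) -/

/-- The word `x_a x_{a+1} … x_{a+len-1}` read in the bi-infinite sequence `x`. -/
def factorWord {A : Type*} (x : ℤ → A) (a : ℤ) (len : ℕ) : List A :=
  (List.range len).map fun t => x (a + t)

/-- `tauIter τ n d a = (τ_n ∘ τ_{n+1} ∘ … ∘ τ_{n+d-1}) (a)`: the image of the letter `a`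
of level `n + d` under the composition of the directive sequence down to level `n`.
In particular `tauIter τ 0 n` is `τ_{[0,n)}`. -/
def tauIter (τ : ℕ → ℕ → List ℕ) (n : ℕ) : ℕ → ℕ → List ℕ
  | 0, a => [a]
  | d + 1, a => (τ (n + d) a).flatMap (tauIter τ n d)

/-- The S-adic subshift generated by the directive sequence `τ` at level `n`
(the level-`n` alphabet consists of the naturals `< m n`). -/
def SAdicLevel (m : ℕ → ℕ) (τ : ℕ → ℕ → List ℕ) (n : ℕ) : Set (ℤ → ℕ) :=
  {x | (∀ i, x i < m n) ∧
    ∀ (a : ℤ) (len : ℕ), ∃ N c, n < N ∧ c < m N ∧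
      factorWord x a len <:+: tauIter τ n (N - n) c}

/-- The prescribed prefix `v_1² v_2² … v_{a}² v_{a+1} … v_{k+1}` in `0`-based letters:
letters `0, …, a-1` doubled, followed by the letters `a, …, k`. -/
def pkPrefix (k a : ℕ) : List ℕ :=
  (List.range a).flatMap (fun j => [j, j]) ++ (List.range (k + 1 - a)).map (fun j => a + j)

/-- Property `(P_k)` for a directive sequence `τ` with alphabet sizes `m`: `τ₀` is a
(non-erasing) hat morphism and, for every `n ≥ 1`, `τ_n` is primitive, has the prescribed
prefixes, ends with the last letter of the level-`n` alphabet, and no image contains the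
word (last letter)(first letter).  Level-`n` letters are `0, 1, …, m n - 1`, so the
letter `v_{i,n}` of the paper is `i - 1`. -/
def PropertyPk (k : ℕ) (m : ℕ → ℕ) (τ : ℕ → ℕ → List ℕ) : Prop :=
  (∀ n, 1 ≤ n → k < m n) ∧
  (∀ n a, a < m (n + 1) → τ n a ≠ [] ∧ ∀ c ∈ τ n a, c < m n) ∧
  (∀ a b, a < m 1 → b < m 1 → a ≠ b → ∀ c, c ∈ τ 0 a → c ∉ τ 0 b) ∧
  (∀ n, 1 ≤ n → ∀ a, a < m (n + 1) → ∀ b, b < m n → b ∈ τ n a) ∧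
  (∀ n, 1 ≤ n → ∀ a, a ≤ k → pkPrefix k a <+: τ n a) ∧
  (∀ n, 1 ≤ n → ∀ a, k < a → a < m (n + 1) → (List.replicate (a + 1) 0 ++ [1]) <+: τ n a) ∧
  (∀ n, 1 ≤ n → ∀ a, a < m (n + 1) →
    ([m n - 1] <:+ τ n a ∧ ¬ ([m n - 1, 0] <:+: τ n a)))

/-- Property `(P_∞)`: as `(P_k)` but with `k` replaced by `n` at level `n`. -/
def PropertyPinf (m : ℕ → ℕ) (τ : ℕ → ℕ → List ℕ) : Prop :=
  (∀ n, 1 ≤ n → n < m n) ∧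
  (∀ n a, a < m (n + 1) → τ n a ≠ [] ∧ ∀ c ∈ τ n a, c < m n) ∧
  (∀ a b, a < m 1 → b < m 1 → a ≠ b → ∀ c, c ∈ τ 0 a → c ∉ τ 0 b) ∧
  (∀ n, 1 ≤ n → ∀ a, a < m (n + 1) → ∀ b, b < m n → b ∈ τ n a) ∧
  (∀ n, 1 ≤ n → ∀ a, a ≤ n → pkPrefix n a <+: τ n a) ∧
  (∀ n, 1 ≤ n → ∀ a, n < a → a < m (n + 1) → (List.replicate (a + 1) 0 ++ [1]) <+: τ n a) ∧
  (∀ n, 1 ≤ n → ∀ a, a < m (n + 1) →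
    ([m n - 1] <:+ τ n a ∧ ¬ ([m n - 1, 0] <:+: τ n a)))

/-- The (integer) position in the concatenation `σ(y)` at which the block `σ(y_j)` starts,
the block `σ(y_0)` starting at position `0`. -/
def cumLen (σ : ℕ → List ℕ) (y : ℤ → ℕ) (j : ℤ) : ℤ :=
  if 0 ≤ j then ((List.range j.toNat).map fun t => ((σ (y t)).length : ℤ)).sum
  else -(((List.range (-j).toNat).map fun t => ((σ (y (j + t))).length : ℤ)).sum)

/-- `x = S^r (σ(y))`, where `σ(y) = … σ(y_{-1}).σ(y_0) σ(y_1) …` is the concatenated image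
of the bi-infinite sequence `y` (block `σ(y_0)` starting at coordinate `0`): for every `j`,
the word `σ(y_j)` is read in `x` starting at position `cumLen σ y j - r`. -/
def IsShiftedImage (σ : ℕ → List ℕ) (y : ℤ → ℕ) (r : ℤ) (x : ℤ → ℕ) : Prop :=
  ∀ j : ℤ, factorWord x (cumLen σ y j - r) (σ (y j)).length = σ (y j)



/-! ### Auxiliary word combinatorics -/

section WordInfra

variable {σ : ℕ → List ℕ} {M z B : ℕ}

/-- A nonempty suffix of a list ending in `z` ends in `z`. -/
lemma aux_suffix_ends {l s g : List ℕ} {z : ℕ} (hl : l = g ++ [z]) (hs : s <:+ l)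
    (hne : s ≠ []) : ∃ s', s = s' ++ [z] := by
  rcases List.eq_nil_or_concat s with h | ⟨L, b, rfl⟩
  · exact absurd h hne
  · obtain ⟨t, ht⟩ := hs
    rw [List.concat_eq_append] at ht ⊢
    have h2 : (t ++ L) ++ [b] = g ++ [z] := by rw [← hl, ← ht]; simp [List.append_assoc]
    have := (List.append_inj' h2 rfl).2
    simp only [List.cons.injEq] at this
    exact ⟨L, by rw [this.1]⟩

lemma aux_suffix_of_append {l a b : List ℕ} (h : l <:+ a ++ b) (hlen : l.length ≤ b.length) :
    l <:+ b := by
  rcases List.suffix_or_suffix_of_suffix h (List.suffix_append a b) with h1 | h1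
  · exact h1
  · have : b = l := List.IsSuffix.eq_of_length h1 (le_antisymm (h1.length_le) hlen)
    rw [← this]

lemma aux_flatMap_ends (Hlast : ∀ a < M, ∃ g, σ a = g ++ [z])
    {mm : List ℕ} (hm : ∀ a ∈ mm, a < M) (hne : mm ≠ []) :
    ∃ q, mm.flatMap σ = q ++ [z] := by
  rcases List.eq_nil_or_concat mm with h | ⟨L, a, rfl⟩
  · exact absurd h hne
  · rw [List.concat_eq_append, List.flatMap_append]
    obtain ⟨g, hg⟩ := Hlast a (hm a (by simp))
    exact ⟨L.flatMap σ ++ g, by simp [hg, List.append_assoc]⟩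

lemma aux_sandwich_ends (Hlast : ∀ a < M, ∃ g, σ a = g ++ [z])
    {sa mm : List ℕ} (hsa : ∃ q, sa = q ++ [z]) (hm : ∀ a ∈ mm, a < M) :
    ∃ q, sa ++ mm.flatMap σ = q ++ [z] := by
  rcases eq_or_ne mm [] with rfl | hne
  · simpa using hsa
  · obtain ⟨q, hq⟩ := aux_flatMap_ends Hlast hm hne
    exact ⟨sa ++ q, by rw [hq, List.append_assoc]⟩

lemma aux_flatMap_len (hB : ∀ a < M, (σ a).length ≤ B) :
    ∀ {mm : List ℕ}, (∀ a ∈ mm, a < M) → (mm.flatMap σ).length ≤ mm.length * B := by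
  intro mm
  induction mm with
  | nil => simp
  | cons a l ih =>
    intro h
    simp only [List.flatMap_cons, List.length_append, List.length_cons]
    have h1 := hB a (h a (by simp))
    have h2 := ih (fun b hb => h b (by simp [hb]))
    calc (σ a).length + (l.flatMap σ).length ≤ B + l.length * B := by omega
    _ = (l.length + 1) * B := by ring

/-- Parsing an arbitrary split of a concatenation of blocks. -/
lemma aux_parse : ∀ (u w₁ w₂ : List ℕ), u.flatMap σ = w₁ ++ w₂ →
    (w₂ = [] ∧ w₁ = u.flatMap σ) ∨
    ∃ u₁ a u₂ p s, u = u₁ ++ a :: u₂ ∧ σ a = p ++ s ∧ s ≠ [] ∧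
      w₁ = u₁.flatMap σ ++ p ∧ w₂ = s ++ u₂.flatMap σ := by
  intro u
  induction u with
  | nil =>
    intro w₁ w₂ h
    simp only [List.flatMap_nil] at h
    have := List.append_eq_nil_iff.mp h.symm
    exact Or.inl ⟨this.2, by simp [this.1, this.2]⟩
  | cons a u' ih =>
    intro w₁ w₂ h
    rw [List.flatMap_cons] at h
    have hw₁pre : w₁ <+: σ a ++ u'.flatMap σ := by rw [h]; exact List.prefix_append w₁ w₂
    by_cases hlen : w₁.length < (σ a).length
    · -- split point inside σ a
      have hpre : w₁ <+: σ a :=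
        List.prefix_of_prefix_length_le hw₁pre (List.prefix_append (σ a) _) (le_of_lt hlen)
      obtain ⟨s, hs⟩ := hpre
      refine Or.inr ⟨[], a, u', w₁, s, by simp, hs.symm, ?_, by simp, ?_⟩
      · intro hsnil
        rw [hsnil, List.append_nil] at hs
        rw [hs] at hlen
        omega
      · have : w₁ ++ (s ++ u'.flatMap σ) = w₁ ++ w₂ := by
          rw [← List.append_assoc, hs, ← h]
        exact (List.append_cancel_left this).symm
    · push_neg at hlen
      have hpre : σ a <+: w₁ :=
        List.prefix_of_prefix_length_le (List.prefix_append (σ a) _) hw₁pre hlen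
      obtain ⟨w₁', hw₁⟩ := hpre
      have h' : u'.flatMap σ = w₁' ++ w₂ := by
        have : σ a ++ u'.flatMap σ = σ a ++ (w₁' ++ w₂) := by
          rw [h, ← hw₁, List.append_assoc]
        exact List.append_cancel_left this
      rcases ih w₁' w₂ h' with ⟨h1, h2⟩ | ⟨u₁, b, u₂, p, s, h1, h2, h3, h4, h5⟩
      · exact Or.inl ⟨h1, by rw [← hw₁, h2, List.flatMap_cons]⟩
      · refine Or.inr ⟨a :: u₁, b, u₂, p, s, by rw [h1]; rfl, h2, h3, ?_, h5⟩
        rw [← hw₁, h4]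
        simp [List.append_assoc]

lemma aux_mem_infix_flatMap {a : ℕ} {l : List ℕ} (h : a ∈ l) (f : ℕ → List ℕ) :
    f a <:+: l.flatMap f := by
  obtain ⟨s, t, rfl⟩ := List.append_of_mem h
  refine ⟨s.flatMap f, t.flatMap f, ?_⟩
  simp [List.flatMap_append, List.append_assoc]

/-- Structure of an occurrence around its final letter: the final letter `c` sits at
offset `p` inside a block `σ b`, and going left we see full blocks `mid` and a
nonempty suffix `sa` of a block, ending in `z`. -/
lemma aux_occ_struct (Hlast : ∀ a < M, ∃ g, σ a = g ++ [z])
    (hB : ∀ a < M, (σ a).length ≤ B)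
    {u w : List ℕ} {c : ℕ} (hu : ∀ a ∈ u, a < M)
    (h : w ++ [c] <:+: u.flatMap σ) (hw : 2 * B + 2 ≤ w.length) :
    ∃ (v₁ mid u₂ : List ℕ) (aL b : ℕ) (sa p s' : List ℕ),
      u = v₁ ++ aL :: (mid ++ b :: u₂) ∧
      σ b = p ++ c :: s' ∧
      w = sa ++ mid.flatMap σ ++ p ∧
      (∃ sa', sa = sa' ++ [z]) ∧ sa.length ≤ B := by
  obtain ⟨g, t, hgt⟩ := h
  have heq : u.flatMap σ = (g ++ w) ++ (c :: t) := by
    rw [← hgt]; simp [List.append_assoc]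
  rcases aux_parse u (g ++ w) (c :: t) heq with ⟨h1, _⟩ | ⟨u₁, b, u₂, p, s, hu₁, hσb, hsne, h1, h2⟩
  · simp at h1
  -- identify the head of s with c
  obtain ⟨s', rfl⟩ : ∃ s', s = c :: s' := by
    cases s with
    | nil => exact absurd rfl hsne
    | cons hd tl =>
      rw [List.cons_append] at h2
      injection h2 with h21 h22
      exact ⟨tl, by rw [h21]⟩
  have hbM : b < M := hu b (by rw [hu₁]; exact List.mem_append_right _ (by simp))
  have hplen : p.length + 1 ≤ B := by
    have := hB b hbM
    rw [hσb] at this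
    simp at this
    omega
  -- p is a suffix of w
  have hpsuf : p <:+ w := by
    apply aux_suffix_of_append (a := g) (b := w) _ (by omega)
    rw [h1]
    exact ⟨u₁.flatMap σ, rfl⟩
  obtain ⟨w'', hw''⟩ := hpsuf
  have hgw : g ++ w'' = u₁.flatMap σ := by
    have : (g ++ w'') ++ p = u₁.flatMap σ ++ p := by
      rw [List.append_assoc, hw'', h1]
    exact List.append_cancel_right this
  have hw''len : B + 1 ≤ w''.length := by
    have : w''.length + p.length = w.length := by rw [← hw'']; simp
    omega
  rcases aux_parse u₁ g w'' hgw.symm with ⟨h3, _⟩ | ⟨v₁, aL, mid, pa, sa, hv₁, hσa, hsane, h3, h4⟩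
  · rw [h3] at hw''len; simp at hw''len
  have haLM : aL < M := by
    apply hu
    rw [hu₁, hv₁]
    simp
  have hsasuf : sa <:+ σ aL := ⟨pa, hσa.symm⟩
  obtain ⟨gz, hgz⟩ := Hlast aL haLM
  refine ⟨v₁, mid, u₂, aL, b, sa, p, s', ?_, hσb, ?_, aux_suffix_ends hgz hsasuf hsane, ?_⟩
  · rw [hu₁, hv₁]; simp
  · rw [← hw'', h4]
  · have := hB aL haLM
    have := hsasuf.length_le
    omega

/-- Two block-suffix decompositions of the same word have equal final blocks. -/
lemma aux_block_eq_aux (Hhead : ∀ a < M, ∃ r, σ a = 0 :: r)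
    (Hnoz0 : ∀ a < M, ¬ [z, 0] <:+: σ a)
    {a₁ a₂ : ℕ} (ha₁ : a₁ < M) (ha₂ : a₂ < M) {D₁ D₂ : List ℕ}
    (hc : D₁ ++ σ a₁ = D₂ ++ σ a₂)
    (hD₁ : D₁ = [] ∨ ∃ q, D₁ = q ++ [z])
    (hlen : (σ a₁).length ≤ (σ a₂).length) : σ a₁ = σ a₂ := by
  have hsuf : σ a₁ <:+ σ a₂ := by
    apply aux_suffix_of_append (a := D₂) _ hlen
    rw [← hc]; exact ⟨D₁, rfl⟩
  obtain ⟨h, hh⟩ := hsuf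
  rcases eq_or_ne h [] with rfl | hne
  · simpa using hh
  have hD₁eq : D₁ = D₂ ++ h := by
    apply List.append_cancel_right (bs := σ a₁)
    rw [List.append_assoc, hh, hc]
  have hD₁ne : D₁ ≠ [] := by
    rw [hD₁eq]
    intro hcon
    exact hne (List.append_eq_nil_iff.mp hcon).2
  obtain ⟨q, hq⟩ := hD₁.resolve_left hD₁ne
  obtain ⟨h', hh'⟩ := aux_suffix_ends hq ⟨D₂, hD₁eq.symm⟩ hne
  obtain ⟨r, hr⟩ := Hhead a₁ ha₁
  exfalso
  apply Hnoz0 a₂ ha₂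
  refine ⟨h', r, ?_⟩
  rw [← hh, hh', hr]
  simp

lemma aux_sigma_inj (Hhead : ∀ a < M, ∃ r, σ a = 0 :: r)
    (Hnopre : ∀ a < M, ∀ b < M, a ≠ b → ¬ σ a <+: σ b)
    {a₁ a₂ : ℕ} (ha₁ : a₁ < M) (ha₂ : a₂ < M) (h : σ a₁ = σ a₂) : a₁ = a₂ := by
  by_contra hne
  exact Hnopre a₁ ha₁ a₂ ha₂ hne (h ▸ List.prefix_refl _)

/-- Alignment of two block decompositions reading the same word from the right. -/
lemma aux_flatmap_suffix_align (Hhead : ∀ a < M, ∃ r, σ a = 0 :: r)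
    (Hlast : ∀ a < M, ∃ g, σ a = g ++ [z])
    (Hnoz0 : ∀ a < M, ¬ [z, 0] <:+: σ a)
    (Hnopre : ∀ a < M, ∀ b < M, a ≠ b → ¬ σ a <+: σ b) :
    ∀ (m₁ m₂ f₁ f₂ : List ℕ), (∀ a ∈ m₁, a < M) → (∀ a ∈ m₂, a < M) →
      f₁ ++ m₁.flatMap σ = f₂ ++ m₂.flatMap σ →
      (f₁ = [] ∨ ∃ q, f₁ = q ++ [z]) → (f₂ = [] ∨ ∃ q, f₂ = q ++ [z]) →
      m₁ <:+ m₂ ∨ m₂ <:+ m₁ := by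
  intro m₁
  induction m₁ using List.reverseRecOn with
  | nil => intro m₂ _ _ _ _ _ _ _; exact Or.inl (List.nil_suffix)
  | append_singleton m₁' a₁ ih =>
    intro m₂ f₁ f₂ hm₁ hm₂ hc hf₁ hf₂
    rcases List.eq_nil_or_concat m₂ with rfl | ⟨m₂', a₂, rfl⟩
    · exact Or.inr (List.nil_suffix)
    rw [List.concat_eq_append] at *
    have ha₁ : a₁ < M := hm₁ a₁ (by simp)
    have ha₂ : a₂ < M := hm₂ a₂ (by simp)
    have hm₁' : ∀ a ∈ m₁', a < M := fun a ha => hm₁ a (by simp [ha])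
    have hm₂' : ∀ a ∈ m₂', a < M := fun a ha => hm₂ a (by simp [ha])
    have hc' : (f₁ ++ m₁'.flatMap σ) ++ σ a₁ = (f₂ ++ m₂'.flatMap σ) ++ σ a₂ := by
      simpa [List.flatMap_append, List.append_assoc] using hc
    have hD : ∀ (f : List ℕ) (mm : List ℕ), (∀ a ∈ mm, a < M) →
        (f = [] ∨ ∃ q, f = q ++ [z]) →
        (f ++ mm.flatMap σ = [] ∨ ∃ q, f ++ mm.flatMap σ = q ++ [z]) := by
      intro f mm hmm hf
      rcases eq_or_ne mm [] with rfl | hne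
      · rcases hf with rfl | ⟨q, hq⟩
        · exact Or.inl (by simp)
        · exact Or.inr ⟨q, by simp [hq]⟩
      · obtain ⟨q, hq⟩ := aux_flatMap_ends Hlast hmm hne
        exact Or.inr ⟨f ++ q, by rw [hq, List.append_assoc]⟩
    have hblocks : σ a₁ = σ a₂ := by
      rcases le_total (σ a₁).length (σ a₂).length with hl | hl
      · exact aux_block_eq_aux Hhead Hnoz0 ha₁ ha₂ hc' (hD f₁ m₁' hm₁' hf₁) hl
      · exact (aux_block_eq_aux Hhead Hnoz0 ha₂ ha₁ hc'.symm (hD f₂ m₂' hm₂' hf₂) hl).symm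
    have haeq : a₁ = a₂ := aux_sigma_inj Hhead Hnopre ha₁ ha₂ hblocks
    have hcancel : f₁ ++ m₁'.flatMap σ = f₂ ++ m₂'.flatMap σ := by
      apply List.append_cancel_right (bs := σ a₁)
      rw [hc']; rw [hblocks]
    rcases ih m₂' f₁ f₂ hm₁' hm₂' hcancel hf₁ hf₂ with ⟨q, hq⟩ | ⟨q, hq⟩
    · exact Or.inl ⟨q, by rw [← List.append_assoc, hq, haeq]⟩
    · exact Or.inr ⟨q, by rw [← List.append_assoc, hq, haeq]⟩

/-- If `p` is a nonempty prefix of a block, it starts with `0`. -/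
lemma aux_prefix_zero (Hhead : ∀ a < M, ∃ r, σ a = 0 :: r)
    {b : ℕ} (hb : b < M) {p rest : List ℕ} (hσ : σ b = p ++ rest) (hp : p ≠ []) :
    ∃ p', p = 0 :: p' := by
  obtain ⟨r, hr⟩ := Hhead b hb
  cases p with
  | nil => exact absurd rfl hp
  | cons hd tl =>
    rw [hr, List.cons_append] at hσ
    injection hσ.symm with h1 _
    exact ⟨tl, by rw [h1]⟩

/-- Key alignment: two "suffix-of-block + full blocks + prefix-of-block" decompositions
of the same (long) word have the same final partial block `p`. -/
lemma aux_align_le (Hhead : ∀ a < M, ∃ r, σ a = 0 :: r)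
    (Hlast : ∀ a < M, ∃ g, σ a = g ++ [z])
    (Hnoz0 : ∀ a < M, ¬ [z, 0] <:+: σ a)
    (Hnopre : ∀ a < M, ∀ b < M, a ≠ b → ¬ σ a <+: σ b)
    (hB : ∀ a < M, (σ a).length ≤ B)
    {w sa₁ sa₂ m₁ m₂ p₁ p₂ t₁ t₂ : List ℕ} {b₁ b₂ c₁ c₂ : ℕ}
    (hb₁ : b₁ < M) (hb₂ : b₂ < M)
    (hm₁ : ∀ a ∈ m₁, a < M) (hm₂ : ∀ a ∈ m₂, a < M)
    (hw₁ : w = sa₁ ++ m₁.flatMap σ ++ p₁) (hw₂ : w = sa₂ ++ m₂.flatMap σ ++ p₂)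
    (hz₁ : ∃ q, sa₁ = q ++ [z]) (hz₂ : ∃ q, sa₂ = q ++ [z])
    (hsa₁ : sa₁.length ≤ B)
    (hσ₁ : σ b₁ = p₁ ++ c₁ :: t₁) (hσ₂ : σ b₂ = p₂ ++ c₂ :: t₂)
    (hlen : 2 * B + 2 ≤ w.length) (hple : p₁.length ≤ p₂.length) : p₁ = p₂ := by
  have hp₁suf : p₁ <:+ w := ⟨sa₁ ++ m₁.flatMap σ, hw₁.symm⟩
  have hp₂suf : p₂ <:+ w := ⟨sa₂ ++ m₂.flatMap σ, hw₂.symm⟩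
  obtain ⟨e, he⟩ : p₁ <:+ p₂ := List.suffix_of_suffix_length_le hp₁suf hp₂suf hple
  rcases eq_or_ne e [] with rfl | hene
  · rw [← he]; rfl
  -- now e ≠ []; derive a contradiction
  exfalso
  have hC : sa₁ ++ m₁.flatMap σ = (sa₂ ++ m₂.flatMap σ) ++ e := by
    have h1 : (sa₁ ++ m₁.flatMap σ) ++ p₁ = ((sa₂ ++ m₂.flatMap σ) ++ e) ++ p₁ := by
      rw [← hw₁, hw₂, ← he]; simp [List.append_assoc]
    exact List.append_cancel_right h1
  have hCz : ∃ q, sa₁ ++ m₁.flatMap σ = q ++ [z] := aux_sandwich_ends Hlast hz₁ hm₁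
  obtain ⟨q, hq⟩ := hCz
  obtain ⟨e', he'⟩ : ∃ e', e = e' ++ [z] :=
    aux_suffix_ends hq ⟨sa₂ ++ m₂.flatMap σ, hC.symm⟩ hene
  rcases eq_or_ne p₁ [] with rfl | hp₁ne
  · -- p₁ = [] : the previous x-block ends exactly before the bifurcation
    rw [List.append_nil] at he
    subst he
    rw [List.append_nil] at hw₁
    -- now the final partial block of the second decomposition is `e`
    rcases List.eq_nil_or_concat m₁ with rfl | ⟨m₁', aL, rfl⟩
    · -- w = sa₁, too short
      simp only [List.flatMap_nil, List.append_nil] at hw₁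
      rw [hw₁] at hlen
      omega
    · rw [List.concat_eq_append] at *
      have haL : aL < M := hm₁ aL (by simp)
      have hm₁' : ∀ a ∈ m₁', a < M := fun a ha => hm₁ a (by simp [ha])
      set A := σ aL with hA
      have hwx : w = (sa₁ ++ m₁'.flatMap σ) ++ A := by
        rw [hw₁]; simp [List.flatMap_append, List.append_assoc, hA]
      have hD₁z : ∃ q, sa₁ ++ m₁'.flatMap σ = q ++ [z] := aux_sandwich_ends Hlast hz₁ hm₁'
      have hD₂z : ∃ q, sa₂ ++ m₂.flatMap σ = q ++ [z] := aux_sandwich_ends Hlast hz₂ hm₂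
      have hAsuf : A <:+ w := by rw [hwx]; exact ⟨_, rfl⟩
      have hAne : A ≠ [] := by
        obtain ⟨g, hg⟩ := Hlast aL haL
        rw [hA, hg]; simp
      rcases lt_trichotomy A.length e.length with hcmp | hcmp | hcmp
      · -- A is a proper suffix of p₂
        obtain ⟨h, hh⟩ : A <:+ e := List.suffix_of_suffix_length_le hAsuf hp₂suf (le_of_lt hcmp)
        have hhne : h ≠ [] := by
          intro hcon; rw [hcon] at hh; simp at hh; rw [hh] at hcmp; omega
        have hDeq : sa₁ ++ m₁'.flatMap σ = (sa₂ ++ m₂.flatMap σ) ++ h := by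
          apply List.append_cancel_right (bs := A)
          rw [← hwx, hw₂, ← hh]; simp [List.append_assoc]
        obtain ⟨q₁, hq₁⟩ := hD₁z
        obtain ⟨h', hh'⟩ := aux_suffix_ends hq₁ ⟨_, hDeq.symm⟩ hhne
        obtain ⟨r, hr⟩ := Hhead aL haL
        apply Hnoz0 b₂ hb₂
        refine ⟨h', r ++ c₂ :: t₂, ?_⟩
        rw [hσ₂, ← hh, hh', hA, hr]
        simp
      · -- A = e : a full block is a proper prefix of σ b₂
        have hAp₂ : A = e := List.IsSuffix.eq_of_length
          (List.suffix_of_suffix_length_le hAsuf hp₂suf (le_of_eq hcmp)) hcmp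
        rcases eq_or_ne aL b₂ with rfl | hab
        · rw [← hAp₂] at hσ₂
          have := congrArg List.length hσ₂
          simp [← hA] at this
        · exact Hnopre aL haL b₂ hb₂ hab ⟨c₂ :: t₂, by rw [hσ₂, ← hAp₂, hA]⟩
      · -- p₂ is a proper suffix of A
        obtain ⟨h, hh⟩ : e <:+ A := List.suffix_of_suffix_length_le hp₂suf hAsuf (le_of_lt hcmp)
        have hhne : h ≠ [] := by
          intro hcon; rw [hcon] at hh; simp at hh; rw [hh] at hcmp; omega
        have hp₂ne : e ≠ [] := hene
        have hDeq : sa₂ ++ m₂.flatMap σ = (sa₁ ++ m₁'.flatMap σ) ++ h := by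
          apply List.append_cancel_right (bs := e)
          rw [← hw₂, hwx, ← hh]; simp [List.append_assoc]
        obtain ⟨q₂, hq₂⟩ := hD₂z
        obtain ⟨h', hh'⟩ := aux_suffix_ends hq₂ ⟨_, hDeq.symm⟩ hhne
        obtain ⟨p₂', hp₂'⟩ := aux_prefix_zero Hhead hb₂ hσ₂ hp₂ne
        apply Hnoz0 aL haL
        refine ⟨h', p₂', ?_⟩
        rw [← hA, ← hh, hh', hp₂']
        simp
  · -- p₁ ≠ [] : pattern [z,0] inside σ b₂
    obtain ⟨p₁', hp₁'⟩ := aux_prefix_zero Hhead hb₁ hσ₁ hp₁ne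
    apply Hnoz0 b₂ hb₂
    refine ⟨e', p₁' ++ c₂ :: t₂, ?_⟩
    rw [hσ₂, ← he, he', hp₁']
    simp


lemma aux_align (Hhead : ∀ a < M, ∃ r, σ a = 0 :: r)
    (Hlast : ∀ a < M, ∃ g, σ a = g ++ [z])
    (Hnoz0 : ∀ a < M, ¬ [z, 0] <:+: σ a)
    (Hnopre : ∀ a < M, ∀ b < M, a ≠ b → ¬ σ a <+: σ b)
    (hB : ∀ a < M, (σ a).length ≤ B)
    {w sa₁ sa₂ m₁ m₂ p₁ p₂ t₁ t₂ : List ℕ} {b₁ b₂ c₁ c₂ : ℕ}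
    (hb₁ : b₁ < M) (hb₂ : b₂ < M)
    (hm₁ : ∀ a ∈ m₁, a < M) (hm₂ : ∀ a ∈ m₂, a < M)
    (hw₁ : w = sa₁ ++ m₁.flatMap σ ++ p₁) (hw₂ : w = sa₂ ++ m₂.flatMap σ ++ p₂)
    (hz₁ : ∃ q, sa₁ = q ++ [z]) (hz₂ : ∃ q, sa₂ = q ++ [z])
    (hsa₁ : sa₁.length ≤ B) (hsa₂ : sa₂.length ≤ B)
    (hσ₁ : σ b₁ = p₁ ++ c₁ :: t₁) (hσ₂ : σ b₂ = p₂ ++ c₂ :: t₂)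
    (hlen : 2 * B + 2 ≤ w.length) : p₁ = p₂ := by
  rcases le_total p₁.length p₂.length with hple | hple
  · exact aux_align_le Hhead Hlast Hnoz0 Hnopre hB hb₁ hb₂ hm₁ hm₂ hw₁ hw₂ hz₁ hz₂ hsa₁
      hσ₁ hσ₂ hlen hple
  · exact (aux_align_le Hhead Hlast Hnoz0 Hnopre hB hb₂ hb₁ hm₂ hm₁ hw₂ hw₁ hz₂ hz₁ hsa₂
      hσ₂ hσ₁ hlen hple).symm

/-- The main one-level lemma: two occurrences of `w ++ [cx]`, `w ++ [cy]` (same long `w`,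
different final letters) in block concatenations must bifurcate at the same offset `p`
inside blocks `σ b`, `σ b'`, at a position preceded in `w` by `z`, and the block letters
`b, b'` themselves appear after a common word `wb`. -/
lemma aux_lemC (Hhead : ∀ a < M, ∃ r, σ a = 0 :: r)
    (Hlast : ∀ a < M, ∃ g, σ a = g ++ [z])
    (Hnoz0 : ∀ a < M, ¬ [z, 0] <:+: σ a)
    (Hnopre : ∀ a < M, ∀ b < M, a ≠ b → ¬ σ a <+: σ b)
    (hB : ∀ a < M, (σ a).length ≤ B)
    {u u' w : List ℕ} {cx cy : ℕ} (hu : ∀ a ∈ u, a < M) (hu' : ∀ a ∈ u', a < M)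
    (hocc : w ++ [cx] <:+: u.flatMap σ) (hocc' : w ++ [cy] <:+: u'.flatMap σ)
    (hne : cx ≠ cy) (Lb : ℕ) (hB1 : 1 ≤ B) (hw : B * (Lb + 2) + 2 ≤ w.length) :
    ∃ b b' wb p tx ty, b < M ∧ b' < M ∧ b ≠ b' ∧
      σ b = p ++ cx :: tx ∧ σ b' = p ++ cy :: ty ∧
      (wb ++ [b]) <:+: u ∧ (wb ++ [b']) <:+: u' ∧ Lb ≤ wb.length ∧
      ∃ w₀, w = w₀ ++ [z] ++ p := by
  have hw' : 2 * B + 2 ≤ w.length := by nlinarith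
  obtain ⟨v₁, mid, u₂, aL, b, sa, p, s', hueq, hσb, hweq, hsaz, hsalen⟩ :=
    aux_occ_struct Hlast hB hu hocc hw'
  obtain ⟨v₁', mid', u₂', aL', b', sa', p', s'', hueq', hσb', hweq', hsaz', hsalen'⟩ :=
    aux_occ_struct Hlast hB hu' hocc' hw'
  have hbM : b < M := hu b (by rw [hueq]; simp)
  have hbM' : b' < M := hu' b' (by rw [hueq']; simp)
  have hmid : ∀ a ∈ mid, a < M := fun a ha => hu a (by rw [hueq]; simp [ha])
  have hmid' : ∀ a ∈ mid', a < M := fun a ha => hu' a (by rw [hueq']; simp [ha])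
  have hpp' : p = p' :=
    aux_align Hhead Hlast Hnoz0 Hnopre hB hbM hbM' hmid hmid' hweq hweq' hsaz hsaz'
      hsalen hsalen' hσb hσb' hw'
  subst hpp'
  have hbb' : b ≠ b' := by
    intro hcon
    rw [hcon, hσb'] at hσb
    have := List.append_cancel_left hσb
    injection this with h1 _
    exact hne h1.symm
  have hcancel : sa ++ mid.flatMap σ = sa' ++ mid'.flatMap σ := by
    have h1 : (sa ++ mid.flatMap σ) ++ p = (sa' ++ mid'.flatMap σ) ++ p := by
      rw [← hweq]  -- hweq : w = sa ++ mid.flatMap σ ++ p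
      rw [hweq']
    exact List.append_cancel_right h1
  have hplen : p.length ≤ B := by
    have := hB b hbM
    rw [hσb] at this
    simp at this
    omega
  have hmidlen : ∀ (mm sx : List ℕ), (∀ a ∈ mm, a < M) → sx.length ≤ B →
      w = sx ++ mm.flatMap σ ++ p → Lb ≤ mm.length := by
    intro mm sx hmm hsx hwe
    have h1 : (mm.flatMap σ).length ≤ mm.length * B := aux_flatMap_len hB hmm
    have h2 : w.length = sx.length + (mm.flatMap σ).length + p.length := by
      rw [hwe]; simp; omega
    by_contra hcon
    push_neg at hcon
    have h3 : (mm.length + 1) * B ≤ Lb * B := Nat.mul_le_mul_right B hcon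
    have h4 : B * (Lb + 2) = Lb * B + 2 * B := by ring
    have h5 : (mm.length + 1) * B = mm.length * B + B := by ring
    linarith
  have hmidLb : Lb ≤ mid.length := hmidlen mid sa hmid hsalen hweq
  have hmidLb' : Lb ≤ mid'.length := hmidlen mid' sa' hmid' hsalen' hweq'
  have hsand : ∃ q, sa ++ mid.flatMap σ = q ++ [z] := aux_sandwich_ends Hlast hsaz hmid
  obtain ⟨w₀, hw₀⟩ := hsand
  have hwz : ∃ w₀, w = w₀ ++ [z] ++ p := ⟨w₀, by rw [hweq, hw₀]⟩
  rcases aux_flatmap_suffix_align Hhead Hlast Hnoz0 Hnopre mid mid' sa sa' hmid hmid'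
      hcancel (Or.inr hsaz) (Or.inr hsaz') with hsub | hsub
  · -- mid <:+ mid' : take wb = mid
    obtain ⟨qq, hqq⟩ := hsub
    refine ⟨b, b', mid, p, s', s'', hbM, hbM', hbb', hσb, hσb', ?_, ?_, hmidLb, hwz⟩
    · exact ⟨v₁ ++ [aL], u₂, by rw [hueq]; simp [List.append_assoc]⟩
    · exact ⟨v₁' ++ aL' :: qq, u₂', by rw [hueq', ← hqq]; simp [List.append_assoc]⟩
  · -- mid' <:+ mid : take wb = mid'
    obtain ⟨qq, hqq⟩ := hsub
    refine ⟨b, b', mid', p, s', s'', hbM, hbM', hbb', hσb, hσb', ?_, ?_, hmidLb', hwz⟩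
    · exact ⟨v₁ ++ aL :: qq, u₂, by rw [hueq, ← hqq]; simp [List.append_assoc]⟩
    · exact ⟨v₁' ++ [aL'], u₂', by rw [hueq']; simp [List.append_assoc]⟩

end WordInfra



/-! ### Structure of the prescribed prefixes -/

section PkFacts

/-- `pkPrefix k a` with `a ≤ k` continues after the doubled part with the letter `a`. -/
lemma aux_pk_P1 (k a : ℕ) (hak : a ≤ k) :
    ∃ r, pkPrefix k a = (List.range a).flatMap (fun j => [j, j]) ++ a :: r := by
  obtain ⟨l, hl⟩ : ∃ l, k + 1 - a = l + 1 := ⟨k - a, by omega⟩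
  refine ⟨(List.map (fun x => x + 1) (List.range l)).map (fun j => a + j), ?_⟩
  rw [pkPrefix, hl, List.range_succ_eq_map, List.map_cons]
  norm_num

/-- `pkPrefix k a` with `a + 1 ≤ k` starts with doubled part, then `a`, then `a + 1`. -/
lemma aux_pk_P2 (k a : ℕ) (hak : a + 1 ≤ k) :
    ∃ r, pkPrefix k a =
      ((List.range a).flatMap (fun j => [j, j]) ++ [a]) ++ (a + 1) :: r := by
  obtain ⟨l, hl⟩ : ∃ l, k + 1 - a = l + 2 := ⟨k - 1 - a, by omega⟩
  refine ⟨(((List.range l).map Nat.succ).map Nat.succ).map (fun j => a + j), ?_⟩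
  rw [pkPrefix, hl, List.range_succ_eq_map, List.range_succ_eq_map]
  simp [List.append_assoc]

/-- For `a ≥ 1`, `pkPrefix k a` starts with `[0, 0]`. -/
lemma aux_pk_P3 (k a : ℕ) (ha : 1 ≤ a) : ∃ r, pkPrefix k a = [0, 0] ++ r := by
  obtain ⟨a', rfl⟩ : ∃ a', a = a' + 1 := ⟨a - 1, by omega⟩
  refine ⟨((List.range a').map (fun x => x + 1)).flatMap (fun j => [j, j]) ++
    (List.range (k + 1 - (a' + 1))).map (fun j => a' + 1 + j), ?_⟩
  rw [pkPrefix, List.range_succ_eq_map, List.flatMap_cons]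
  simp [List.append_assoc]

/-- `pkPrefix k 0` starts with `0`. -/
lemma aux_pk_P3' (k : ℕ) : ∃ r, pkPrefix k 0 = 0 :: r := by
  refine ⟨((List.range k).map (fun x => x + 1)).map (fun j => 0 + j), ?_⟩
  rw [pkPrefix]
  norm_num [List.range_succ_eq_map]

/-- For `1 ≤ a ≤ k`, `pkPrefix k a` starts with `[0, 0, 1]`. -/
lemma aux_pk_P4 (k a : ℕ) (ha : 1 ≤ a) (hak : a ≤ k) :
    ∃ r, pkPrefix k a = [0, 0] ++ 1 :: r := by
  rcases eq_or_lt_of_le ha with rfl | ha2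
  · -- a = 1
    obtain ⟨l, hl⟩ : ∃ l, k + 1 - 1 = l + 1 := ⟨k - 1, by omega⟩
    refine ⟨((List.range l).map Nat.succ).map (fun j => 1 + j), ?_⟩
    rw [pkPrefix, hl, show List.range 1 = [0] by rfl, List.range_succ_eq_map]
    simp [List.append_assoc]
  · -- a ≥ 2
    obtain ⟨a', rfl⟩ : ∃ a', a = a' + 2 := ⟨a - 2, by omega⟩
    refine ⟨1 :: ((((List.range a').map Nat.succ).map Nat.succ).flatMap
      (fun j => [j, j]) ++ (List.range (k + 1 - (a' + 2))).map (fun j => a' + 2 + j)), ?_⟩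
    rw [pkPrefix, List.range_succ_eq_map, List.range_succ_eq_map]
    simp [List.append_assoc]

/-- `pkPrefix k 0` starts with `[0, 1]` when `k ≥ 1`. -/
lemma aux_pk_P6 (k : ℕ) (hk : 1 ≤ k) : ∃ r, pkPrefix k 0 = [0] ++ 1 :: r := by
  obtain ⟨l, hl⟩ : ∃ l, k + 1 = l + 2 := ⟨k - 1, by omega⟩
  refine ⟨(((List.range l).map Nat.succ).map Nat.succ).map (fun j => 0 + j), ?_⟩
  rw [pkPrefix]
  simp only [Nat.sub_zero]
  rw [hl, List.range_succ_eq_map, List.range_succ_eq_map]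
  simp [List.append_assoc]

/-- Splitting the doubled part: for `a < b` the doubled list for `b` extends the one
for `a` by `a, a, …`. -/
lemma aux_pk_P5 (a : ℕ) : ∀ j, ∃ r, (List.range (a + 1 + j)).flatMap (fun i => [i, i]) =
    ((List.range a).flatMap (fun i => [i, i]) ++ [a]) ++ a :: r := by
  intro j
  induction j with
  | zero =>
    refine ⟨[], ?_⟩
    rw [List.range_succ, List.flatMap_append]
    simp
  | succ j ih =>
    obtain ⟨r, hr⟩ := ih
    refine ⟨r ++ [a + 1 + j, a + 1 + j], ?_⟩
    have : a + 1 + (j + 1) = (a + 1 + j) + 1 := by omega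
    rw [this, List.range_succ, List.flatMap_append, hr]
    simp [List.append_assoc]

end PkFacts

section TauFacts

variable {k : ℕ} {m : ℕ → ℕ} {τ : ℕ → ℕ → List ℕ}

lemma aux_tau_head (hP : PropertyPk k m τ) {ν : ℕ} (hν : 1 ≤ ν) :
    ∀ a < m (ν + 1), ∃ r, τ ν a = 0 :: r := by
  intro a ha
  by_cases hak : a ≤ k
  · obtain ⟨t, ht⟩ := hP.2.2.2.2.1 ν hν a hak
    rcases Nat.eq_zero_or_pos a with rfl | hpos
    · obtain ⟨r, hr⟩ := aux_pk_P3' k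
      exact ⟨r ++ t, by rw [← ht, hr]; simp⟩
    · obtain ⟨r, hr⟩ := aux_pk_P3 k a hpos
      exact ⟨0 :: r ++ t, by rw [← ht, hr]; simp⟩
  · obtain ⟨t, ht⟩ := hP.2.2.2.2.2.1 ν hν a (by omega) ha
    refine ⟨List.replicate a 0 ++ [1] ++ t, ?_⟩
    rw [← ht, List.replicate_succ]
    simp [List.append_assoc]

lemma aux_tau_last (hP : PropertyPk k m τ) {ν : ℕ} (hν : 1 ≤ ν) :
    ∀ a < m (ν + 1), ∃ g, τ ν a = g ++ [m ν - 1] := by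
  intro a ha
  obtain ⟨g, hg⟩ := (hP.2.2.2.2.2.2 ν hν a ha).1
  exact ⟨g, hg.symm⟩

lemma aux_tau_noz0 (hP : PropertyPk k m τ) {ν : ℕ} (hν : 1 ≤ ν) :
    ∀ a < m (ν + 1), ¬ [m ν - 1, 0] <:+: τ ν a := fun a ha =>
  (hP.2.2.2.2.2.2 ν hν a ha).2

/-- First-difference classification of the prescribed prefixes, `a < b` version. -/
lemma aux_FD_lt (hk : 1 ≤ k) (hP : PropertyPk k m τ) {ν : ℕ} (hν : 1 ≤ ν)
    {a b : ℕ} (ha : a < m (ν + 1)) (hb : b < m (ν + 1)) (hab : a < b) :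
    ∃ P ca cb ta tb, τ ν a = P ++ ca :: ta ∧ τ ν b = P ++ cb :: tb ∧ ca ≠ cb ∧
      (∃ c, c + 1 ≤ k ∧ ((ca = c ∧ cb = c + 1) ∨ (ca = c + 1 ∧ cb = c))) ∧
      (a ≤ k → b ≤ k →
        P = (List.range (min a b)).flatMap (fun j => [j, j]) ++ [min a b]) := by
  by_cases hbk : b ≤ k
  · -- both ≤ k
    have hak1 : a + 1 ≤ k := by omega
    obtain ⟨t₁, ht₁⟩ := hP.2.2.2.2.1 ν hν a (by omega)
    obtain ⟨r₂, hr₂⟩ := aux_pk_P2 k a hak1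
    obtain ⟨t₂, ht₂⟩ := hP.2.2.2.2.1 ν hν b hbk
    obtain ⟨r₁, hr₁⟩ := aux_pk_P1 k b hbk
    obtain ⟨j, hj⟩ : ∃ j, b = a + 1 + j := ⟨b - a - 1, by omega⟩
    obtain ⟨r₅, hr₅⟩ := aux_pk_P5 a j
    refine ⟨(List.range a).flatMap (fun i => [i, i]) ++ [a], a + 1, a,
      r₂ ++ t₁, r₅ ++ b :: r₁ ++ t₂, ?_, ?_, by omega, ⟨a, hak1, Or.inr ⟨rfl, rfl⟩⟩,
      fun _ _ => by rw [min_eq_left (le_of_lt hab)]⟩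
    · rw [← ht₁, hr₂]; simp [List.append_assoc]
    · rw [← ht₂, hr₁, hj, hr₅]; simp [List.append_assoc]
  · -- k < b
    obtain ⟨t₂, ht₂⟩ := hP.2.2.2.2.2.1 ν hν b (by omega) hb
    by_cases hak : a ≤ k
    · rcases Nat.eq_zero_or_pos a with rfl | hpos
      · -- a = 0 < k < b
        obtain ⟨t₁, ht₁⟩ := hP.2.2.2.2.1 ν hν 0 (by omega)
        obtain ⟨r₆, hr₆⟩ := aux_pk_P6 k hk
        obtain ⟨j, hj⟩ : ∃ j, b + 1 = 2 + j := ⟨b - 1, by omega⟩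
        refine ⟨[0], 1, 0, r₆ ++ t₁, List.replicate j 0 ++ [1] ++ t₂, ?_, ?_,
          by omega, ⟨0, by omega, Or.inr ⟨rfl, rfl⟩⟩, fun _ h => absurd h (by omega)⟩
        · rw [← ht₁, hr₆]; simp [List.append_assoc]
        · rw [← ht₂, hj, List.replicate_add]
          simp [List.replicate_succ, List.append_assoc]
      · -- 1 ≤ a ≤ k < b
        obtain ⟨t₁, ht₁⟩ := hP.2.2.2.2.1 ν hν a hak
        obtain ⟨r₄, hr₄⟩ := aux_pk_P4 k a hpos hak
        obtain ⟨j, hj⟩ : ∃ j, b + 1 = 3 + j := ⟨b - 2, by omega⟩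
        refine ⟨[0, 0], 1, 0, r₄ ++ t₁, List.replicate j 0 ++ [1] ++ t₂, ?_, ?_,
          by omega, ⟨0, by omega, Or.inr ⟨rfl, rfl⟩⟩, fun _ h => absurd h (by omega)⟩
        · rw [← ht₁, hr₄]; simp [List.append_assoc]
        · rw [← ht₂, hj, List.replicate_add]
          simp [List.replicate_succ, List.append_assoc]
    · -- k < a < b
      obtain ⟨t₁, ht₁⟩ := hP.2.2.2.2.2.1 ν hν a (by omega) ha
      obtain ⟨j, hj⟩ : ∃ j, b + 1 = (a + 1) + (j + 1) := ⟨b - a - 1, by omega⟩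
      refine ⟨List.replicate (a + 1) 0, 1, 0, t₁,
        List.replicate j 0 ++ [1] ++ t₂, ?_, ?_,
        by omega, ⟨0, by omega, Or.inr ⟨rfl, rfl⟩⟩, fun h _ => absurd h (by omega)⟩
      · rw [← ht₁]; simp [List.append_assoc]
      · rw [← ht₂, hj, List.replicate_add]
        simp [List.replicate_succ, List.append_assoc]

/-- First-difference classification, general version. -/
lemma aux_FD (hk : 1 ≤ k) (hP : PropertyPk k m τ) {ν : ℕ} (hν : 1 ≤ ν)
    {a b : ℕ} (ha : a < m (ν + 1)) (hb : b < m (ν + 1)) (hab : a ≠ b) :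
    ∃ P ca cb ta tb, τ ν a = P ++ ca :: ta ∧ τ ν b = P ++ cb :: tb ∧ ca ≠ cb ∧
      (∃ c, c + 1 ≤ k ∧ ((ca = c ∧ cb = c + 1) ∨ (ca = c + 1 ∧ cb = c))) ∧
      (a ≤ k → b ≤ k →
        P = (List.range (min a b)).flatMap (fun j => [j, j]) ++ [min a b]) := by
  rcases lt_or_gt_of_ne hab with h | h
  · exact aux_FD_lt hk hP hν ha hb h
  · obtain ⟨P, ca, cb, ta, tb, h1, h2, h3, ⟨c, hc1, hc2⟩, h5⟩ := aux_FD_lt hk hP hν hb ha h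
    refine ⟨P, cb, ca, tb, ta, h2, h1, h3.symm, ⟨c, hc1, ?_⟩,
      fun ha' hb' => by rw [min_comm a b]; exact h5 hb' ha'⟩
    rcases hc2 with ⟨x1, x2⟩ | ⟨x1, x2⟩
    · exact Or.inr ⟨x2, x1⟩
    · exact Or.inl ⟨x2, x1⟩

lemma aux_tau_nopre (hk : 1 ≤ k) (hP : PropertyPk k m τ) {ν : ℕ} (hν : 1 ≤ ν) :
    ∀ a < m (ν + 1), ∀ b < m (ν + 1), a ≠ b → ¬ τ ν a <+: τ ν b := by
  intro a ha b hb hab ⟨t, ht⟩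
  obtain ⟨P, ca, cb, ta, tb, h1, h2, h3, -, -⟩ := aux_FD hk hP hν ha hb hab
  rw [← ht, h1, List.append_assoc] at h2
  have := List.append_cancel_left h2
  rw [List.cons_append] at this
  injection this with h4 _
  exact h3 h4

end TauFacts


section IterFacts

variable {k : ℕ} {m : ℕ → ℕ} {τ : ℕ → ℕ → List ℕ}

lemma aux_tauIter_peel (τ : ℕ → ℕ → List ℕ) (n : ℕ) :
    ∀ d c, tauIter τ n (d + 1) c = (tauIter τ (n + 1) d c).flatMap (τ n) := by
  intro d
  induction d with
  | zero =>
    intro c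
    show (τ n c).flatMap (tauIter τ n 0) = (tauIter τ (n + 1) 0 c).flatMap (τ n)
    simp [tauIter]
  | succ d ih =>
    intro c
    show (τ (n + (d + 1)) c).flatMap (tauIter τ n (d + 1))
        = ((τ (n + 1 + d) c).flatMap (tauIter τ (n + 1) d)).flatMap (τ n)
    rw [List.flatMap_assoc]
    have hnn : n + (d + 1) = n + 1 + d := by omega
    rw [hnn]
    congr 1
    funext b
    exact ih b

lemma aux_tauIter_letters (hP : PropertyPk k m τ) (p : ℕ) :
    ∀ d c b, c < m (p + d) → b ∈ tauIter τ p d c → b < m p := by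
  intro d
  induction d with
  | zero =>
    intro c b hc hb
    simp [tauIter] at hb
    subst hb
    simpa using hc
  | succ d ih =>
    intro c b hc hb
    rw [show tauIter τ p (d + 1) c = (τ (p + d) c).flatMap (tauIter τ p d) from rfl,
      List.mem_flatMap] at hb
    obtain ⟨a, ha, hba⟩ := hb
    exact ih a b ((hP.2.1 (p + d) c hc).2 a ha) hba

lemma aux_tauIter_bump (hk : 1 ≤ k) (hP : PropertyPk k m τ) {n : ℕ} (hn : 1 ≤ n) :
    ∀ t d c, 1 ≤ d → c < m (n + d) →
      ∃ c', c' < m (n + d + t) ∧ tauIter τ n d c <:+: tauIter τ n (d + t) c' := by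
  intro t
  induction t with
  | zero => intro d c _ hc; exact ⟨c, hc, List.infix_refl _⟩
  | succ t ih =>
    intro d c hd hc
    obtain ⟨c', hc', hinf⟩ := ih d c hd hc
    have h0m : 0 < m (n + d + t + 1) := by
      have := hP.1 (n + d + t + 1) (by omega)
      omega
    have hmem : c' ∈ τ (n + d + t) 0 := hP.2.2.2.1 (n + d + t) (by omega) 0 h0m c' hc'
    refine ⟨0, h0m, ?_⟩
    have heq : tauIter τ n (d + (t + 1)) 0
        = (τ (n + (d + t)) 0).flatMap (tauIter τ n (d + t)) := rfl
    rw [heq, show n + (d + t) = n + d + t by omega]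
    exact hinf.trans (aux_mem_infix_flatMap hmem _)

end IterFacts

section FactorFacts

lemma aux_factorWord_eq (x : ℤ → ℕ) (a : ℤ) (len : ℕ) :
    factorWord x a len = (List.range len).map (fun t : ℕ => x (a + (t : ℤ))) := by
  unfold factorWord
  induction len with
  | zero => simp
  | succ l ih =>
    rw [List.range_succ]
    simp only [List.map_append, List.flatMap_append] at *
    rw [← ih]
    simp

lemma aux_factorWord_length (x : ℤ → ℕ) (a : ℤ) (len : ℕ) :
    (factorWord x a len).length = len := by simp [aux_factorWord_eq]

lemma aux_factorWord_append (x : ℤ → ℕ) (a : ℤ) (l₁ l₂ : ℕ) :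
    factorWord x a (l₁ + l₂) = factorWord x a l₁ ++ factorWord x (a + l₁) l₂ := by
  rw [aux_factorWord_eq, aux_factorWord_eq, aux_factorWord_eq]
  rw [List.range_add, List.map_append, List.map_map]
  congr 1
  apply List.map_congr_left
  intro t _
  simp only [Function.comp_apply]
  congr 1
  push_cast
  ring

lemma aux_factorWord_one (x : ℤ → ℕ) (a : ℤ) : factorWord x a 1 = [x a] := by
  rw [aux_factorWord_eq, show List.range 1 = [0] from rfl]
  simp only [List.map_cons, List.map_nil, Nat.cast_zero, add_zero]

end FactorFacts

/-- Uniqueness of the bifurcation decomposition. -/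
lemma aux_uniq {A A' p P : List ℕ} {c₁ c₂ d₁ d₂ : ℕ} {t₁ t₂ r₁ r₂ : List ℕ}
    (h₁ : A = p ++ c₁ :: t₁) (h₂ : A = P ++ d₁ :: r₁)
    (h₃ : A' = p ++ c₂ :: t₂) (h₄ : A' = P ++ d₂ :: r₂)
    (hc : c₁ ≠ c₂) (hd : d₁ ≠ d₂) : p = P ∧ c₁ = d₁ ∧ c₂ = d₂ := by
  have hpA : p <+: A := ⟨c₁ :: t₁, h₁.symm⟩
  have hPA : P <+: A := ⟨d₁ :: r₁, h₂.symm⟩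
  rcases List.prefix_or_prefix_of_prefix hpA hPA with ⟨e, he⟩ | ⟨e, he⟩
  · cases e with
    | nil =>
      rw [List.append_nil] at he
      subst he
      have k₁ : c₁ :: t₁ = d₁ :: r₁ := List.append_cancel_left (h₁ ▸ h₂)
      have k₂ : c₂ :: t₂ = d₂ :: r₂ := List.append_cancel_left (h₃ ▸ h₄)
      injection k₁ with k₁' _
      injection k₂ with k₂' _
      exact ⟨rfl, k₁', k₂'⟩
    | cons r₀ e' =>
      exfalso
      have k₁ : c₁ :: t₁ = r₀ :: (e' ++ d₁ :: r₁) := by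
        apply List.append_cancel_left (as := p)
        rw [← h₁, h₂, ← he]
        simp
      have k₂ : c₂ :: t₂ = r₀ :: (e' ++ d₂ :: r₂) := by
        apply List.append_cancel_left (as := p)
        rw [← h₃, h₄, ← he]
        simp
      injection k₁ with k₁' _
      injection k₂ with k₂' _
      exact hc (k₁'.trans k₂'.symm)
  · cases e with
    | nil =>
      rw [List.append_nil] at he
      subst he
      have k₁ : c₁ :: t₁ = d₁ :: r₁ := List.append_cancel_left (h₁ ▸ h₂)
      have k₂ : c₂ :: t₂ = d₂ :: r₂ := List.append_cancel_left (h₃ ▸ h₄)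
      injection k₁ with k₁' _
      injection k₂ with k₂' _
      exact ⟨rfl, k₁', k₂'⟩
    | cons r₀ e' =>
      exfalso
      have k₁ : d₁ :: r₁ = r₀ :: (e' ++ c₁ :: t₁) := by
        apply List.append_cancel_left (as := P)
        rw [← h₂, h₁, ← he]
        simp
      have k₂ : d₂ :: r₂ = r₀ :: (e' ++ c₂ :: t₂) := by
        apply List.append_cancel_left (as := P)
        rw [← h₄, h₃, ← he]
        simp
      injection k₁ with k₁' _
      injection k₂ with k₂' _
      exact hd (k₁'.trans k₂'.symm)

lemma aux_dbl_len : ∀ c : ℕ, ((List.range c).flatMap (fun j => [j, j])).length = 2 * c := by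
  intro c
  induction c with
  | zero => simp
  | succ c ih =>
    rw [List.range_succ, List.flatMap_append]
    simp only [List.length_append, ih]
    simp
    omega


lemma aux_factorWord_snoc (x : ℤ → ℕ) (a : ℤ) (len : ℕ) :
    factorWord x a (len + 1) = factorWord x a len ++ [x (a + len)] := by
  rw [aux_factorWord_append, aux_factorWord_one]

/-- Existence of the minimal bifurcation position. -/
lemma aux_exists_min_diff {x y : ℤ → ℕ} (hxy : x ≠ y) (hasym : SAsymp x y) :
    ∃ ℓ : ℤ, (∀ i < ℓ, x i = y i) ∧ x ℓ ≠ y ℓ := by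
  classical
  obtain ⟨ℓ₀, hℓ₀⟩ := hasym
  have hdiff : ∃ j : ℤ, x j ≠ y j := by
    by_contra hcon
    push_neg at hcon
    exact hxy (funext hcon)
  obtain ⟨j, hj⟩ := hdiff
  have hjℓ₀ : ℓ₀ ≤ j := by
    by_contra hcon
    push_neg at hcon
    exact hj (hℓ₀ j hcon)
  have hPex : ∃ t : ℕ, x (ℓ₀ + t) ≠ y (ℓ₀ + t) := by
    refine ⟨(j - ℓ₀).toNat, ?_⟩
    rwa [show ℓ₀ + ((j - ℓ₀).toNat : ℤ) = j by omega]
  refine ⟨ℓ₀ + (Nat.find hPex : ℤ), ?_, Nat.find_spec hPex⟩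
  intro i hi
  rcases lt_or_ge i ℓ₀ with h | h
  · exact hℓ₀ i h
  · have h2 : (i - ℓ₀).toNat < Nat.find hPex := by omega
    have h3 := not_not.mp (Nat.find_min hPex h2)
    rwa [show ℓ₀ + ((i - ℓ₀).toNat : ℤ) = i by omega] at h3

/-- Under Property `(P_k)`, for a nontrivial asymptotic pair `(x, y)` at
level `n ≥ 1`, the bifurcation is `J(x,y) = (v_{i,n}, ℓ)` with `1 ≤ i ≤ k`, and at the
bifurcation point the signal is preceded by `v_{m_n,n} v_{1,n}² … v_{i-1,n}²`:
`x_{[ℓ-2i, ℓ)} = v_{m_n,n} v_{1,n}² … v_{i-1,n}² v_{i,n}`.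
(Letters are `0`-based: `v_{i,n}` is `i - 1`.) -/
theorem signal_preceded_of_propertyPk
    (k : ℕ) (hk : 1 ≤ k) (m : ℕ → ℕ) (τ : ℕ → ℕ → List ℕ) (hP : PropertyPk k m τ)
    (n : ℕ) (hn : 1 ≤ n) (x y : ℤ → ℕ)
    (hx : x ∈ SAdicLevel m τ n) (hy : y ∈ SAdicLevel m τ n)
    (hxy : x ≠ y) (hasym : SAsymp x y) :
    ∃ (ℓ : ℤ) (i : ℕ), 1 ≤ i ∧ i ≤ k ∧
      (∀ j < ℓ, x j = y j) ∧ x ℓ ≠ y ℓ ∧ x (ℓ - 1) = i - 1 ∧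
      factorWord x (ℓ - 2 * (i : ℤ)) (2 * i) =
        (m n - 1) :: ((List.range (i - 1)).flatMap (fun j => [j, j]) ++ [i - 1]) := by
  classical
  obtain ⟨ℓ, hmin, hneℓ⟩ := aux_exists_min_diff hxy hasym
  obtain ⟨-, hx2⟩ := hx
  obtain ⟨-, hy2⟩ := hy
  -- block length bounds
  set B : ℕ := (Finset.range (m (n + 1))).sup (fun a => (τ n a).length) + 1 with hBdef
  set B' : ℕ := (Finset.range (m (n + 2))).sup (fun a => (τ (n + 1) a).length) + 1 with hB'def
  have hBle : ∀ a < m (n + 1), (τ n a).length ≤ B := by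
    intro a ha
    calc (τ n a).length ≤ (Finset.range (m (n + 1))).sup (fun a => (τ n a).length) :=
          Finset.le_sup (f := fun a => (τ n a).length) (Finset.mem_range.2 ha)
    _ ≤ B := by omega
  have hB'le : ∀ a < m (n + 2), (τ (n + 1) a).length ≤ B' := by
    intro a ha
    calc (τ (n + 1) a).length
        ≤ (Finset.range (m (n + 2))).sup (fun a => (τ (n + 1) a).length) :=
          Finset.le_sup (f := fun a => (τ (n + 1) a).length) (Finset.mem_range.2 ha)
    _ ≤ B' := by omega
  set Lb : ℕ := 2 * B' + 2 with hLbdef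
  set L : ℕ := B * (Lb + 2) + 2 with hLdef
  have hLpos : 1 ≤ L := by rw [hLdef]; omega
  -- the common word of length L ending just before ℓ
  set w : List ℕ := factorWord x (ℓ - L) L with hwdef
  have hwlen : w.length = L := by rw [hwdef, aux_factorWord_length]
  have hwy : w = factorWord y (ℓ - L) L := by
    rw [hwdef, aux_factorWord_eq, aux_factorWord_eq]
    apply List.map_congr_left
    intro t ht
    rw [List.mem_range] at ht
    apply hmin
    have : (t : ℤ) < L := by exact_mod_cast ht
    omega
  have hsplitx : factorWord x (ℓ - L) (L + 1) = w ++ [x ℓ] := by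
    rw [aux_factorWord_snoc, ← hwdef, show ℓ - (L : ℤ) + (L : ℕ) = ℓ by push_cast; ring]
  have hsplity : factorWord y (ℓ - L) (L + 1) = w ++ [y ℓ] := by
    rw [aux_factorWord_snoc, hwy, show ℓ - (L : ℤ) + (L : ℕ) = ℓ by push_cast; ring]
  -- occurrences in images of level n+1 words
  obtain ⟨N, c, hN, hcm, hinf⟩ := hx2 (ℓ - L) (L + 1)
  obtain ⟨N', c', hN', hcm', hinf'⟩ := hy2 (ℓ - L) (L + 1)
  obtain ⟨c₂, hc₂, hbump⟩ := aux_tauIter_bump hk hP hn 2 (N - n) c (by omega)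
    (by rwa [show n + (N - n) = N by omega])
  obtain ⟨c₂', hc₂', hbump'⟩ := aux_tauIter_bump hk hP hn 2 (N' - n) c' (by omega)
    (by rwa [show n + (N' - n) = N' by omega])
  have hoccx : w ++ [x ℓ] <:+: (tauIter τ (n + 1) ((N - n) + 1) c₂).flatMap (τ n) := by
    rw [← aux_tauIter_peel τ n ((N - n) + 1) c₂]
    exact (hsplitx ▸ hinf).trans hbump
  have hoccy : w ++ [y ℓ] <:+: (tauIter τ (n + 1) ((N' - n) + 1) c₂').flatMap (τ n) := by
    rw [← aux_tauIter_peel τ n ((N' - n) + 1) c₂']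
    exact (hsplity ▸ hinf').trans hbump'
  have hux : ∀ a ∈ tauIter τ (n + 1) ((N - n) + 1) c₂, a < m (n + 1) := by
    intro a ha
    refine aux_tauIter_letters hP (n + 1) ((N - n) + 1) c₂ a ?_ ha
    rw [show (n + 1) + ((N - n) + 1) = n + (N - n) + 2 by omega]
    exact hc₂
  have huy : ∀ a ∈ tauIter τ (n + 1) ((N' - n) + 1) c₂', a < m (n + 1) := by
    intro a ha
    refine aux_tauIter_letters hP (n + 1) ((N' - n) + 1) c₂' a ?_ ha
    rw [show (n + 1) + ((N' - n) + 1) = n + (N' - n) + 2 by omega]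
    exact hc₂'
  -- level n bifurcation analysis
  obtain ⟨b, b', wb, p, tx, ty, hbM, hb'M, hbb', hσb, hσb', hwbx, hwby, hwbLb, w₀, hw₀⟩ :=
    aux_lemC (aux_tau_head hP hn) (aux_tau_last hP hn) (aux_tau_noz0 hP hn)
      (aux_tau_nopre hk hP hn) hBle hux huy hoccx hoccy hneℓ Lb (by omega)
      (by rw [hwlen])
  -- level n+1 bifurcation analysis
  rw [aux_tauIter_peel τ (n + 1) (N - n) c₂] at hwbx
  rw [aux_tauIter_peel τ (n + 1) (N' - n) c₂'] at hwby
  have hVx : ∀ a ∈ tauIter τ (n + 2) (N - n) c₂, a < m (n + 2) := by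
    intro a ha
    refine aux_tauIter_letters hP (n + 2) (N - n) c₂ a ?_ ha
    rw [show (n + 2) + (N - n) = n + (N - n) + 2 by omega]
    exact hc₂
  have hVy : ∀ a ∈ tauIter τ (n + 2) (N' - n) c₂', a < m (n + 2) := by
    intro a ha
    refine aux_tauIter_letters hP (n + 2) (N' - n) c₂' a ?_ ha
    rw [show (n + 2) + (N' - n) = n + (N' - n) + 2 by omega]
    exact hc₂'
  obtain ⟨B₂x, B₂y, wb₂, p₂, tx₂, ty₂, hB₂xM, hB₂yM, hB₂ne, hσ₂x, hσ₂y, -, -, -, -⟩ :=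
    aux_lemC (aux_tau_head hP (by omega)) (aux_tau_last hP (by omega))
      (aux_tau_noz0 hP (by omega)) (aux_tau_nopre hk hP (by omega)) hB'le hVx hVy
      hwbx hwby hbb' 0 (by omega)
      (le_trans (by omega) hwbLb)
  -- classify the level n+1 first difference
  obtain ⟨P₂, ca₂, cb₂, ta₂, tb₂, hfd1, hfd2, hcane, ⟨c₀, hc₀k, hor⟩, -⟩ :=
    aux_FD hk hP (show 1 ≤ n + 1 by omega) hB₂xM hB₂yM hB₂ne
  obtain ⟨-, hbca, hb'cb⟩ := aux_uniq hσ₂x hfd1 hσ₂y hfd2 hbb' hcane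
  have hbk : b ≤ k := by rcases hor with ⟨e1, e2⟩ | ⟨e1, e2⟩ <;> omega
  have hb'k : b' ≤ k := by rcases hor with ⟨e1, e2⟩ | ⟨e1, e2⟩ <;> omega
  have hminbb : min b b' = c₀ := by rcases hor with ⟨e1, e2⟩ | ⟨e1, e2⟩ <;> omega
  -- level n first difference of the consecutive pair (b, b')
  obtain ⟨P₁, ca₁, cb₁, ta₁, tb₁, hg1, hg2, hgne, -, hPval⟩ := aux_FD hk hP hn hbM hb'M hbb'
  obtain ⟨hpP₁, -, -⟩ := aux_uniq hσb hg1 hσb' hg2 hneℓ hgne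
  have hPeq : p = (List.range c₀).flatMap (fun j => [j, j]) ++ [c₀] := by
    rw [hpP₁, hPval hbk hb'k, hminbb]
  have hplen : p.length = 2 * c₀ + 1 := by
    rw [hPeq, List.length_append, aux_dbl_len]
    simp
  have hwsplit : w = (w₀ ++ [m n - 1] ++ (List.range c₀).flatMap (fun j => [j, j])) ++ [c₀] := by
    rw [hw₀, hPeq]
    simp [List.append_assoc]
  clear_value B B' Lb L w
  have h2iL : 2 * c₀ + 2 ≤ L := by
    have hlw := congrArg List.length hw₀
    rw [hwlen] at hlw
    simp only [List.length_append, hplen, List.length_cons, List.length_nil] at hlw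
    omega
  refine ⟨ℓ, c₀ + 1, by omega, hc₀k, hmin, hneℓ, ?_, ?_⟩
  · -- x (ℓ - 1) = c₀
    have e1 := aux_factorWord_snoc x (ℓ - (L : ℤ)) (L - 1)
    rw [show (L - 1) + 1 = L from by omega] at e1
    rw [show ℓ - (L : ℤ) + ((L - 1 : ℕ) : ℤ) = ℓ - 1 from by
      push_cast [Nat.cast_sub hLpos]; try ring] at e1
    have e2 := (hwdef.trans e1).symm.trans hwsplit
    have e3 := (List.append_inj' e2 rfl).2
    have e4 : x (ℓ - 1) = c₀ := by injection e3
    rw [e4]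
    omega
  · -- the window
    have e1 := aux_factorWord_append x (ℓ - (L : ℤ)) (L - (2 * c₀ + 2)) (2 * c₀ + 2)
    rw [show (L - (2 * c₀ + 2)) + (2 * c₀ + 2) = L from by omega] at e1
    rw [show ℓ - (L : ℤ) + ((L - (2 * c₀ + 2) : ℕ) : ℤ) = ℓ - 2 * ((c₀ + 1 : ℕ) : ℤ) from by
      push_cast [Nat.cast_sub h2iL]; try ring] at e1
    have e2 : w = w₀ ++ ((m n - 1) :: ((List.range c₀).flatMap (fun j => [j, j]) ++ [c₀])) := by
      rw [hw₀, hPeq]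
      simp [List.append_assoc]
    have e3 := (hwdef.trans e1).symm.trans e2
    have elen : (factorWord x (ℓ - 2 * ((c₀ + 1 : ℕ) : ℤ)) (2 * c₀ + 2)).length
        = ((m n - 1) :: ((List.range c₀).flatMap (fun j => [j, j]) ++ [c₀])).length := by
      rw [aux_factorWord_length, List.length_cons, List.length_append, aux_dbl_len]
      simp
    have e4 := (List.append_inj' e3 elen).2
    have hii : (c₀ + 1) - 1 = c₀ := by omega
    rw [show 2 * (c₀ + 1) = 2 * c₀ + 2 from by omega, hii]
    exact e4


end AsympSOE
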